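/- arXiv:2407.04313 — 2 statements merged into one kernel-verified Lean document; each statement's English description precedes it below -/
import Mathlib

section
/- Let φ ∈ C(ℝ,X) be uniformly comparable by character of recurrence with ψ ∈ C(ℝ,Y). If ψ is Birkhoff recurrent, then φ is Birkhoff recurrent. -/
open Filter Topology

/-- The Bebutov metric on `C(ℝ, X)`:
`d(φ₁,φ₂) = sup_{T>0} min ( max_{|t| ≤ T} ρ(φ₁(t), φ₂(t)), 1/T )`. -/
noncomputable def bebutovDist {X : Type*} [MetricSpace X] (φ ψ : C(ℝ, X)) : ℝ :=
  ⨆ T : Set.Ioi (0 : ℝ),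
    min (⨆ t : Set.Icc (-(T : ℝ)) (T : ℝ), dist (φ t.1) (ψ t.1)) (1 / (T : ℝ))

/-- The translate `φ^h` of `φ ∈ C(ℝ,X)`, given by `φ^h(t) = φ(t + h)`. -/
def timeShift {X : Type*} [MetricSpace X] (φ : C(ℝ, X)) (h : ℝ) : C(ℝ, X) :=
  ⟨fun t => φ (t + h), φ.continuous.comp (continuous_id.add continuous_const)⟩

/-- `𝔑_φ`: the family of sequences `{tₙ} ⊂ ℝ` with `φ^{tₙ} → φ` in `(C(ℝ,X),d)`. -/
def NClass {X : Type*} [MetricSpace X] (φ : C(ℝ, X)) : Set (ℕ → ℝ) :=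
  {t | Tendsto (fun n => bebutovDist (timeShift φ (t n)) φ) atTop (𝓝 0)}

/-- `𝔐_φ`: the family of sequences `{tₙ} ⊂ ℝ` such that `{φ^{tₙ}}` converges in
`(C(ℝ,X),d)`. -/
def MClass {X : Type*} [MetricSpace X] (φ : C(ℝ, X)) : Set (ℕ → ℝ) :=
  {t | ∃ ψ : C(ℝ, X), Tendsto (fun n => bebutovDist (timeShift φ (t n)) ψ) atTop (𝓝 0)}

/-- `𝔑^u_φ`: sequences in `𝔑_φ` with `φ^{s+tₙ} → φ^s` uniformly in `s ∈ ℝ`. -/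
def NuClass {X : Type*} [MetricSpace X] (φ : C(ℝ, X)) : Set (ℕ → ℝ) :=
  {t | t ∈ NClass φ ∧ ∀ ε > (0 : ℝ), ∃ N : ℕ, ∀ n ≥ N, ∀ s : ℝ,
    bebutovDist (timeShift φ (s + t n)) (timeShift φ s) < ε}

/-- `𝔐^u_φ`: sequences in `𝔐_φ` such that `{φ^{s+tₙ}}` converges uniformly in `s ∈ ℝ`. -/
def MuClass {X : Type*} [MetricSpace X] (φ : C(ℝ, X)) : Set (ℕ → ℝ) :=
  {t | t ∈ MClass φ ∧ ∃ ψ : ℝ → C(ℝ, X), ∀ ε > (0 : ℝ), ∃ N : ℕ, ∀ n ≥ N, ∀ s : ℝ,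
    bebutovDist (timeShift φ (s + t n)) (ψ s) < ε}

/-- A subset `S ⊆ ℝ` is relatively dense if some length `l > 0` interval always meets it. -/
def RelativelyDense (S : Set ℝ) : Prop :=
  ∃ l > (0 : ℝ), ∀ a : ℝ, ∃ τ ∈ S, τ ∈ Set.Icc a (a + l)

/-- `φ` is Poisson stable: for every `ε > 0` and `l > 0` there are `ε`-shifts `τ₊ > l`
and `τ₋ < −l`. -/
def PoissonStable {X : Type*} [MetricSpace X] (φ : C(ℝ, X)) : Prop :=
  ∀ ε > (0 : ℝ), ∀ l > (0 : ℝ),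
    (∃ τ : ℝ, l < τ ∧ bebutovDist (timeShift φ τ) φ < ε) ∧
    (∃ τ : ℝ, τ < -l ∧ bebutovDist (timeShift φ τ) φ < ε)

/-- `φ` is almost recurrent in the sense of Bebutov. -/
def AlmostRecurrent {X : Type*} [MetricSpace X] (φ : C(ℝ, X)) : Prop :=
  ∀ ε > (0 : ℝ), RelativelyDense {τ : ℝ | bebutovDist (timeShift φ τ) φ < ε}

/-- `τ` is an `ε`-almost period of `φ`: `ρ(φ(t+τ),φ(t)) < ε` for all `t`. -/
def IsAlmostPeriod {X : Type*} [MetricSpace X] (φ : C(ℝ, X)) (ε τ : ℝ) : Prop :=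
  ∀ t : ℝ, dist (φ (t + τ)) (φ t) < ε

/-- `φ` is Bohr almost periodic: its set of `ε`-almost periods is relatively dense for
every `ε > 0`. -/
def BohrAlmostPeriodic {X : Type*} [MetricSpace X] (φ : C(ℝ, X)) : Prop :=
  ∀ ε > (0 : ℝ), RelativelyDense {τ : ℝ | IsAlmostPeriod φ ε τ}

/-- `φ` is Lagrange stable: every sequence of translates has a subsequence converging in
the Bebutov metric (i.e. `{φ^h : h ∈ ℝ}` is relatively compact in `(C(ℝ,X),d)`). -/
def LagrangeStable {X : Type*} [MetricSpace X] (φ : C(ℝ, X)) : Prop :=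
  ∀ h : ℕ → ℝ, ∃ (k : ℕ → ℕ) (ψ : C(ℝ, X)), StrictMono k ∧
    Tendsto (fun n => bebutovDist (timeShift φ (h (k n))) ψ) atTop (𝓝 0)

/-- `φ` is Birkhoff recurrent: almost recurrent and Lagrange stable. -/
def BirkhoffRecurrent {X : Type*} [MetricSpace X] (φ : C(ℝ, X)) : Prop :=
  AlmostRecurrent φ ∧ LagrangeStable φ

/-- `φ` is Levitan almost periodic. -/
def LevitanAlmostPeriodic {X : Type*} [MetricSpace X] (φ : C(ℝ, X)) : Prop :=
  ∃ (Z : Type) (_ : MetricSpace Z) (_ : CompleteSpace Z) (χ : C(ℝ, Z)),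
    BohrAlmostPeriodic χ ∧
    ∀ ε > (0 : ℝ), ∃ δ > (0 : ℝ), ∀ τ : ℝ, IsAlmostPeriod χ δ τ →
      bebutovDist (timeShift φ τ) φ < ε

/-- `φ` is quasi-periodic with the spectrum of frequencies `ν₁,…,ν_k`. -/
def QuasiPeriodic {X : Type*} [MetricSpace X] (φ : C(ℝ, X)) {k : ℕ} (ν : Fin k → ℝ) :
    Prop :=
  LinearIndependent ℚ ν ∧
  ∃ Φ : C((Fin k → ℝ), X),
    (∀ v : Fin k → ℝ, Φ (fun i => v i + 2 * Real.pi) = Φ v) ∧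
    ∀ t : ℝ, φ t = Φ (fun i => ν i * t)

/-- `φ` is pseudo-periodic: for every `ε > 0` and `l > 0` there exist `ε`-almost
periods `τ₊ > l` and `τ₋ < −l`. -/
def PseudoPeriodic {X : Type*} [MetricSpace X] (φ : C(ℝ, X)) : Prop :=
  ∀ ε > (0 : ℝ), ∀ l > (0 : ℝ),
    (∃ τ : ℝ, l < τ ∧ IsAlmostPeriod φ ε τ) ∧
    (∃ τ : ℝ, τ < -l ∧ IsAlmostPeriod φ ε τ)

/-- `φ` is pseudo-recurrent. -/
def PseudoRecurrent {X : Type*} [MetricSpace X] (φ : C(ℝ, X)) : Prop :=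
  ∀ ε > (0 : ℝ), ∀ l : ℝ, ∃ L : ℝ, l ≤ L ∧ ∀ τ₀ : ℝ, ∃ τ ∈ Set.Icc l L,
    ∀ t : ℝ, |t| ≤ 1 / ε → dist (φ (t + τ₀ + τ)) (φ (t + τ₀)) ≤ ε


section BebutovHelpers

variable {X : Type*} [MetricSpace X]

instance : Nonempty (Set.Ioi (0:ℝ)) := ⟨⟨1, by norm_num⟩⟩

lemma bddAbove_inner (φ ψ : C(ℝ, X)) (a b : ℝ) :
    BddAbove (Set.range fun t : Set.Icc a b => dist (φ t.1) (ψ t.1)) := by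
  rcases isEmpty_or_nonempty (Set.Icc a b) with hE | hN
  · simp [Set.range_eq_empty]
  · exact (isCompact_range (((map_continuous φ).comp continuous_subtype_val).dist
      ((map_continuous ψ).comp continuous_subtype_val))).bddAbove

lemma bebutovDist_nonneg (φ ψ : C(ℝ, X)) : 0 ≤ bebutovDist φ ψ := by
  apply Real.iSup_nonneg
  intro T
  have hT : (0:ℝ) < T := T.2
  exact le_min (Real.iSup_nonneg fun t => dist_nonneg) (by positivity)

lemma bddAbove_outer (φ ψ : C(ℝ, X)) :
    BddAbove (Set.range fun T : Set.Ioi (0:ℝ) =>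
      min (⨆ t : Set.Icc (-(T : ℝ)) (T : ℝ), dist (φ t.1) (ψ t.1)) (1 / (T : ℝ))) := by
  refine ⟨max (⨆ t : Set.Icc (-1:ℝ) (1:ℝ), dist (φ t.1) (ψ t.1)) 1, ?_⟩
  rintro x ⟨T, rfl⟩
  have hT0 : (0:ℝ) < T := T.2
  rcases le_total (T:ℝ) 1 with hT | hT
  · refine le_trans (min_le_left _ _) (le_trans ?_ (le_max_left _ _))
    haveI : Nonempty (Set.Icc (-(T:ℝ)) (T:ℝ)) := ⟨⟨0, by constructor <;> linarith⟩⟩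
    refine ciSup_le fun t => ?_
    have ht := t.2
    simp only [Set.mem_Icc] at ht
    exact le_ciSup (bddAbove_inner φ ψ (-1) 1)
      (⟨t.1, by constructor <;> linarith [ht.1, ht.2]⟩ : Set.Icc (-1:ℝ) 1)
  · refine le_trans (min_le_right _ _) (le_trans ?_ (le_max_right _ _))
    rw [div_le_one hT0]
    exact hT

lemma bebutovDist_self (φ : C(ℝ, X)) : bebutovDist φ φ = 0 := by
  refine le_antisymm ?_ (bebutovDist_nonneg φ φ)
  refine ciSup_le fun T => ?_
  have hT0 : (0:ℝ) < T := T.2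
  haveI : Nonempty (Set.Icc (-(T:ℝ)) (T:ℝ)) := ⟨⟨0, by constructor <;> linarith⟩⟩
  refine le_trans (min_le_left _ _) ?_
  simp [dist_self, ciSup_const]

lemma bebutovDist_comm (φ ψ : C(ℝ, X)) : bebutovDist φ ψ = bebutovDist ψ φ := by
  unfold bebutovDist
  simp_rw [dist_comm]

lemma bebutovDist_triangle (φ ψ χ : C(ℝ, X)) :
    bebutovDist φ χ ≤ bebutovDist φ ψ + bebutovDist ψ χ := by
  refine ciSup_le fun T => ?_
  have hT0 : (0:ℝ) < T := T.2
  haveI : Nonempty (Set.Icc (-(T:ℝ)) (T:ℝ)) := ⟨⟨0, by constructor <;> linarith⟩⟩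
  have h1 : min (⨆ t : Set.Icc (-(T : ℝ)) (T : ℝ), dist (φ t.1) (ψ t.1)) (1 / (T : ℝ))
      ≤ bebutovDist φ ψ := le_ciSup (bddAbove_outer φ ψ) T
  have h2 : min (⨆ t : Set.Icc (-(T : ℝ)) (T : ℝ), dist (ψ t.1) (χ t.1)) (1 / (T : ℝ))
      ≤ bebutovDist ψ χ := le_ciSup (bddAbove_outer ψ χ) T
  set A := ⨆ t : Set.Icc (-(T : ℝ)) (T : ℝ), dist (φ t.1) (χ t.1) with hA
  set B := ⨆ t : Set.Icc (-(T : ℝ)) (T : ℝ), dist (φ t.1) (ψ t.1) with hB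
  set C := ⨆ t : Set.Icc (-(T : ℝ)) (T : ℝ), dist (ψ t.1) (χ t.1) with hC
  have hBn : 0 ≤ B := Real.iSup_nonneg fun t => dist_nonneg
  have hCn : 0 ≤ C := Real.iSup_nonneg fun t => dist_nonneg
  have key : min A (1/(T:ℝ)) ≤ min B (1/(T:ℝ)) + min C (1/(T:ℝ)) := by
    rcases le_total (1/(T:ℝ)) B with hc1 | hc1
    · have hBe : min B (1/(T:ℝ)) = 1/(T:ℝ) := min_eq_right hc1
      have h' : min A (1/(T:ℝ)) ≤ 1/(T:ℝ) := min_le_right _ _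
      have h'' : 0 ≤ min C (1/(T:ℝ)) := le_min hCn (by positivity)
      linarith
    · rcases le_total (1/(T:ℝ)) C with hc2 | hc2
      · have hCe : min C (1/(T:ℝ)) = 1/(T:ℝ) := min_eq_right hc2
        have h' : min A (1/(T:ℝ)) ≤ 1/(T:ℝ) := min_le_right _ _
        have h'' : 0 ≤ min B (1/(T:ℝ)) := le_min hBn (by positivity)
        linarith
      · have hM : A ≤ B + C := by
          refine ciSup_le fun t => ?_
          exact (dist_triangle (φ t.1) (ψ t.1) (χ t.1)).trans
            (add_le_add (le_ciSup (bddAbove_inner φ ψ _ _) t)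
              (le_ciSup (bddAbove_inner ψ χ _ _) t))
        rw [min_eq_left hc1, min_eq_left hc2]
        exact (min_le_left _ _).trans hM
  exact key.trans (add_le_add h1 h2)

lemma timeShift_zero (φ : C(ℝ, X)) : timeShift φ 0 = φ := ContinuousMap.ext fun t => by
  simp [timeShift]

/-- If `𝔐_ψ ⊆ 𝔐_φ` and `ψ^{rₙ} → ψ`, then `φ^{rₙ} → φ` (interleaving with `0`). -/
lemma nclass_transfer {X Y : Type*} [MetricSpace X] [MetricSpace Y]
    (φ : C(ℝ, X)) (ψ : C(ℝ, Y)) (h : MClass ψ ⊆ MClass φ) (r : ℕ → ℝ)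
    (hr : Tendsto (fun n => bebutovDist (timeShift ψ (r n)) ψ) atTop (𝓝 0)) :
    Tendsto (fun n => bebutovDist (timeShift φ (r n)) φ) atTop (𝓝 0) := by
  set u : ℕ → ℝ := fun n => if n % 2 = 0 then r (n / 2) else 0 with hu
  have hueven : ∀ n, u (2 * n) = r n := by
    intro n; simp only [hu]
    rw [if_pos (by omega)]
    congr 1; omega
  have huodd : ∀ n, u (2 * n + 1) = 0 := by
    intro n; simp only [hu]
    rw [if_neg (by omega)]
  have h2e : Tendsto (fun n : ℕ => 2 * n) atTop atTop :=
    tendsto_atTop_atTop.mpr fun b => ⟨b, fun a ha => by omega⟩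
  have h2o : Tendsto (fun n : ℕ => 2 * n + 1) atTop atTop :=
    tendsto_atTop_atTop.mpr fun b => ⟨b, fun a ha => by omega⟩
  have huM : u ∈ MClass ψ := by
    refine ⟨ψ, Metric.tendsto_atTop.mpr fun ε hε => ?_⟩
    obtain ⟨N, hN⟩ := Metric.tendsto_atTop.mp hr ε hε
    refine ⟨2 * N, fun n hn => ?_⟩
    rcases Nat.even_or_odd n with he | ho
    · obtain ⟨m, rfl⟩ := he
      rw [show m + m = 2 * m by ring, hueven]
      exact hN m (by omega)
    · obtain ⟨m, rfl⟩ := ho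
      rw [huodd, timeShift_zero, bebutovDist_self]
      simpa using hε
  obtain ⟨χ, hχ⟩ := h huM
  have heven : Tendsto (fun n => bebutovDist (timeShift φ (r n)) χ) atTop (𝓝 0) := by
    have := hχ.comp h2e
    simpa [Function.comp_def, hueven] using this
  have hodd : bebutovDist φ χ = 0 := by
    have hcomp := hχ.comp h2o
    simp only [Function.comp_def, huodd, timeShift_zero] at hcomp
    exact tendsto_nhds_unique tendsto_const_nhds hcomp
  refine squeeze_zero (fun n => bebutovDist_nonneg _ _) (fun n => ?_) heven
  calc bebutovDist (timeShift φ (r n)) φ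
      ≤ bebutovDist (timeShift φ (r n)) χ + bebutovDist χ φ := bebutovDist_triangle _ _ _
    _ = bebutovDist (timeShift φ (r n)) χ := by
        rw [bebutovDist_comm χ φ, hodd, add_zero]

end BebutovHelpers

/-- If `φ` is uniformly comparable by character of recurrence with `ψ` (`𝔐_ψ ⊆ 𝔐_φ`)
and `ψ` is Birkhoff recurrent, then so is `φ`. -/
theorem birkhoffRecurrent_of_uniformly_comparable
    {X Y : Type*} [MetricSpace X] [CompleteSpace X] [MetricSpace Y] [CompleteSpace Y]
    (φ : C(ℝ, X)) (ψ : C(ℝ, Y)) (h : MClass ψ ⊆ MClass φ)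
    (hψ : BirkhoffRecurrent ψ) : BirkhoffRecurrent φ := by
  obtain ⟨har, hls⟩ := hψ
  constructor
  · -- Almost recurrence
    by_contra hna
    unfold AlmostRecurrent RelativelyDense at hna
    push_neg at hna
    obtain ⟨ε, hε, hbad⟩ := hna
    have key : ∀ m : ℕ, ∃ τ : ℝ,
        bebutovDist (timeShift ψ τ) ψ < 1 / ((m : ℝ) + 1) ∧
        ε ≤ bebutovDist (timeShift φ τ) φ := by
      intro m
      obtain ⟨l, hl, hdense⟩ := har (1 / ((m : ℝ) + 1)) (by positivity)
      obtain ⟨a, ha⟩ := hbad l hl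
      obtain ⟨τ, hτS, hτI⟩ := hdense a
      refine ⟨τ, hτS, ?_⟩
      by_contra hlt
      push_neg at hlt
      exact ha τ hlt hτI
    choose r hr1 hr2 using key
    have hr : Tendsto (fun n => bebutovDist (timeShift ψ (r n)) ψ) atTop (𝓝 0) :=
      squeeze_zero (fun n => bebutovDist_nonneg _ _) (fun n => (hr1 n).le)
        tendsto_one_div_add_atTop_nhds_zero_nat
    have htr := nclass_transfer φ ψ h r hr
    obtain ⟨N, hN⟩ := Metric.tendsto_atTop.mp htr ε hε
    have h1 := hN N le_rfl
    rw [Real.dist_eq, sub_zero, abs_of_nonneg (bebutovDist_nonneg _ _)] at h1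
    exact absurd h1 (not_lt.mpr (hr2 N))
  · -- Lagrange stability
    intro hs
    obtain ⟨k, χ, hk, hconv⟩ := hls hs
    obtain ⟨χ', hχ'⟩ := h ⟨χ, hconv⟩
    exact ⟨k, χ', hk, hχ'⟩
end

section
/- Let φ ∈ C(ℝ,X) be uniformly comparable by character of recurrence with ψ ∈ C(ℝ,Y), and let ψ be Lagrange stable. If ψ is pseudo-recurrent, then φ is pseudo-recurrent. -/
open Filter Topology

-- Auxiliary lemmas about the Bebutov metric
noncomputable def bSup {X : Type*} [MetricSpace X] (f g : C(ℝ, X)) (T : ℝ) : ℝ :=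
  ⨆ t : Set.Icc (-T) T, dist (f t.1) (g t.1)

lemma bebutovDist_eq {X : Type*} [MetricSpace X] (f g : C(ℝ, X)) :
    bebutovDist f g = ⨆ T : Set.Ioi (0 : ℝ), min (bSup f g T) (1 / (T : ℝ)) := rfl

instance inst_s17 : Nonempty (Set.Ioi (0:ℝ)) := ⟨⟨1, Set.mem_Ioi.mpr one_pos⟩⟩

lemma icc_ne {T : ℝ} (hT : 0 < T) : Nonempty (Set.Icc (-T) T) :=
  ⟨⟨0, by constructor <;> linarith⟩⟩

lemma bddInner {X : Type*} [MetricSpace X] (f g : C(ℝ, X)) (T : ℝ) :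
    BddAbove (Set.range fun t : Set.Icc (-T) T => dist (f t.1) (g t.1)) := by
  have hc : ContinuousOn (fun t : ℝ => dist (f t) (g t)) (Set.Icc (-T) T) :=
    (f.continuous.dist g.continuous).continuousOn
  have := (isCompact_Icc.image_of_continuousOn hc).bddAbove
  rwa [Set.image_eq_range] at this

lemma bSup_nonneg {X : Type*} [MetricSpace X] (f g : C(ℝ, X)) (T : ℝ) :
    0 ≤ bSup f g T := Real.iSup_nonneg fun _ => dist_nonneg

lemma bSup_le {X : Type*} [MetricSpace X] {f g : C(ℝ, X)} {T c : ℝ} (hT : 0 < T)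
    (H : ∀ t : ℝ, |t| ≤ T → dist (f t) (g t) ≤ c) : bSup f g T ≤ c := by
  haveI := icc_ne hT
  exact ciSup_le fun t => H t.1 (abs_le.mpr t.2)

lemma le_bSup {X : Type*} [MetricSpace X] (f g : C(ℝ, X)) {T t : ℝ} (ht : |t| ≤ T) :
    dist (f t) (g t) ≤ bSup f g T :=
  le_ciSup (bddInner f g T) (⟨t, abs_le.mp ht⟩ : Set.Icc (-T) T)

lemma bSup_mono {X : Type*} [MetricSpace X] (f g : C(ℝ, X)) {T T' : ℝ} (hT : 0 < T)
    (h : T ≤ T') : bSup f g T ≤ bSup f g T' := by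
  haveI := icc_ne hT
  refine ciSup_le fun t => le_bSup f g ?_
  have := t.2
  rw [abs_le]; constructor <;> [linarith [this.1]; linarith [this.2]]

lemma bddOuter {X : Type*} [MetricSpace X] (f g : C(ℝ, X)) :
    BddAbove (Set.range fun T : Set.Ioi (0:ℝ) => min (bSup f g T) (1 / (T:ℝ))) := by
  refine ⟨max (bSup f g 1) 1, ?_⟩
  rintro x ⟨T, rfl⟩
  rcases le_total (T:ℝ) 1 with hT | hT
  · exact le_trans (min_le_left _ _) (le_max_of_le_left (bSup_mono f g T.2 hT))
  · refine le_trans (min_le_right _ _) (le_max_of_le_right ?_)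
    rw [div_le_one (lt_of_lt_of_le one_pos hT)]; linarith

lemma bebutovDist_nonneg_s17 {X : Type*} [MetricSpace X] (f g : C(ℝ, X)) :
    0 ≤ bebutovDist f g := by
  rw [bebutovDist_eq]
  exact Real.iSup_nonneg fun T => le_min (bSup_nonneg f g T) (le_of_lt (by have : (0:ℝ) < T := T.2; positivity))

lemma bebutovDist_comm_s17 {X : Type*} [MetricSpace X] (f g : C(ℝ, X)) :
    bebutovDist f g = bebutovDist g f := by
  unfold bebutovDist
  simp_rw [dist_comm]

lemma bebutovDist_le {X : Type*} [MetricSpace X] {f g : C(ℝ, X)} {a b : ℝ} (ha : 0 < a)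
    (H : ∀ t : ℝ, |t| ≤ a → dist (f t) (g t) ≤ b) (hab : 1 / a ≤ b) :
    bebutovDist f g ≤ b := by
  rw [bebutovDist_eq]
  refine ciSup_le fun T => ?_
  rcases le_total (T:ℝ) a with hT | hT
  · refine le_trans (min_le_left _ _) (bSup_le T.2 fun t ht => H t (ht.trans hT))
  · refine le_trans (min_le_right _ _) (le_trans ?_ hab)
    exact one_div_le_one_div_of_le ha hT

lemma le_bebutovDist {X : Type*} [MetricSpace X] {f g : C(ℝ, X)} {ε t₀ : ℝ} (hε : 0 < ε)
    (ht : |t₀| ≤ 1 / ε) (hd : ε ≤ dist (f t₀) (g t₀)) : ε ≤ bebutovDist f g := by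
  rw [bebutovDist_eq]
  have h1 : (0:ℝ) < 1 / ε := by positivity
  have key : ε ≤ min (bSup f g (1/ε)) (1 / (1/ε)) := by
    refine le_min (hd.trans (le_bSup f g ht)) ?_
    rw [one_div_one_div]
  exact key.trans (le_ciSup (bddOuter f g) (⟨1/ε, h1⟩ : Set.Ioi (0:ℝ)))

lemma min_add_min {a b b' c : ℝ} (hb : 0 ≤ b) (hb' : 0 ≤ b') (hc : 0 ≤ c)
    (hab : a ≤ b + b') : min a c ≤ min b c + min b' c := by
  rcases le_total c b with h | h
  · have h1 : min b c = c := min_eq_right h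
    have h2 : 0 ≤ min b' c := le_min hb' hc
    have := min_le_right a c
    linarith
  rcases le_total c b' with h' | h'
  · have h1 : min b' c = c := min_eq_right h'
    have h2 : 0 ≤ min b c := le_min hb hc
    have := min_le_right a c
    linarith
  · rw [min_eq_left h, min_eq_left h']
    exact le_trans (min_le_left a c) hab

lemma bebutovDist_triangle_s17 {X : Type*} [MetricSpace X] (f g k : C(ℝ, X)) :
    bebutovDist f k ≤ bebutovDist f g + bebutovDist g k := by
  rw [bebutovDist_eq]
  refine ciSup_le fun T => ?_
  have hT : (0:ℝ) < T := T.2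
  haveI := icc_ne hT
  have hsum : bSup f k T ≤ bSup f g T + bSup g k T :=
    ciSup_le fun t => (dist_triangle (f t.1) (g t.1) (k t.1)).trans
      (add_le_add (le_ciSup (bddInner f g T) t) (le_ciSup (bddInner g k T) t))
  have step := min_add_min (bSup_nonneg f g T) (bSup_nonneg g k T)
    (by positivity : (0:ℝ) ≤ 1 / T) hsum
  refine step.trans (add_le_add ?_ ?_)
  · rw [bebutovDist_eq]; exact le_ciSup (bddOuter f g) T
  · rw [bebutovDist_eq]; exact le_ciSup (bddOuter g k) T

/-- If `φ` is uniformly comparable by character of recurrence with `ψ` (`𝔐_ψ ⊆ 𝔐_φ`),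
`ψ` is Lagrange stable and pseudo-recurrent, then `φ` is pseudo-recurrent. -/
theorem pseudoRecurrent_of_uniformly_comparable
    {X Y : Type*} [MetricSpace X] [CompleteSpace X] [MetricSpace Y] [CompleteSpace Y]
    (φ : C(ℝ, X)) (ψ : C(ℝ, Y)) (h : MClass ψ ⊆ MClass φ)
    (hL : LagrangeStable ψ) (hψ : PseudoRecurrent ψ) : PseudoRecurrent φ := by
  by_contra hcon
  unfold PseudoRecurrent at hcon
  push_neg at hcon
  obtain ⟨ε₀, hε₀, l, hbad⟩ := hcon
  -- construct sequences
  choose L hLl hgood using fun n : ℕ => hψ (1/(n+1:ℝ)) (by positivity) l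
  choose σ hσ using fun n : ℕ => hbad (L n) (hLl n)
  choose τ hτmem hτ using fun n : ℕ => hgood n (σ n)
  choose t ht hdist using fun n : ℕ => hσ n (τ n) (hτmem n)
  -- ψ-shifts are close
  have hdψ : ∀ n : ℕ, bebutovDist (timeShift ψ (σ n + τ n)) (timeShift ψ (σ n)) ≤ 1/(n+1:ℝ) := by
    intro n
    refine bebutovDist_le (by positivity : (0:ℝ) < n+1) (fun s hs => ?_) (le_refl _)
    have := hτ n s (by rwa [one_div_one_div])
    simpa [timeShift, ← add_assoc] using this
  -- extract convergent subsequences for ψ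
  obtain ⟨k₁, p, hk₁, hconv1⟩ := hL σ
  obtain ⟨k₂, q, hk₂, hconv2⟩ := hL (fun m => σ (k₁ m) + τ (k₁ m))
  set k : ℕ → ℕ := k₁ ∘ k₂ with hk
  have hkmono : StrictMono k := hk₁.comp hk₂
  have hA : Tendsto (fun m => bebutovDist (timeShift ψ (σ (k m))) p) atTop (𝓝 0) :=
    hconv1.comp hk₂.tendsto_atTop
  have hdψ0 : Tendsto (fun n : ℕ => bebutovDist (timeShift ψ (σ n + τ n)) (timeShift ψ (σ n)))
      atTop (𝓝 0) :=
    squeeze_zero (fun n => bebutovDist_nonneg_s17 _ _) hdψ tendsto_one_div_add_atTop_nhds_zero_nat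
  have hdψk : Tendsto (fun m => bebutovDist (timeShift ψ (σ (k m) + τ (k m))) (timeShift ψ (σ (k m))))
      atTop (𝓝 0) := hdψ0.comp hkmono.tendsto_atTop
  have hB : Tendsto (fun m => bebutovDist (timeShift ψ (σ (k m) + τ (k m))) p) atTop (𝓝 0) := by
    have hsum := hdψk.add hA
    rw [add_zero] at hsum
    refine squeeze_zero (fun m => bebutovDist_nonneg_s17 _ _) (fun m => ?_) hsum
    exact bebutovDist_triangle_s17 _ (timeShift ψ (σ (k m))) _
  -- the interleaved sequence
  set s : ℕ → ℝ := fun m => if m % 2 = 0 then σ (k (m/2)) else σ (k (m/2)) + τ (k (m/2)) with hs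
  have hdiv2 : Tendsto (fun m : ℕ => m / 2) atTop atTop :=
    Filter.tendsto_atTop_atTop.2 fun b => ⟨2*b, fun n hn => by omega⟩
  have hsψ : Tendsto (fun m => bebutovDist (timeShift ψ (s m)) p) atTop (𝓝 0) := by
    have hmax : Tendsto (fun m : ℕ => max (bebutovDist (timeShift ψ (σ (k (m/2)))) p)
        (bebutovDist (timeShift ψ (σ (k (m/2)) + τ (k (m/2)))) p)) atTop (𝓝 0) := by
      have := (hA.max hB).comp hdiv2
      rwa [max_self] at this
    refine squeeze_zero (fun m => bebutovDist_nonneg_s17 _ _) (fun m => ?_) hmax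
    by_cases hm : m % 2 = 0
    · simp only [hs, hm, if_pos]; exact le_max_left _ _
    · simp only [hs, hm, if_neg, if_false]; exact le_max_right _ _
  have hsM : s ∈ MClass ψ := ⟨p, hsψ⟩
  obtain ⟨χ, hχ⟩ := h hsM
  -- even / odd subsequences for φ
  have h2m : Tendsto (fun m : ℕ => 2*m) atTop atTop :=
    Filter.tendsto_atTop_atTop.2 fun b => ⟨b, fun n hn => by omega⟩
  have h2m1 : Tendsto (fun m : ℕ => 2*m+1) atTop atTop :=
    Filter.tendsto_atTop_atTop.2 fun b => ⟨b, fun n hn => by omega⟩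
  have hEven : Tendsto (fun m => bebutovDist (timeShift φ (σ (k m))) χ) atTop (𝓝 0) := by
    refine (hχ.comp h2m).congr fun m => ?_
    have h1 : (2*m) % 2 = 0 := by omega
    have h2 : (2*m) / 2 = m := by omega
    simp [hs, h1, h2]
  have hOdd : Tendsto (fun m => bebutovDist (timeShift φ (σ (k m) + τ (k m))) χ) atTop (𝓝 0) := by
    refine (hχ.comp h2m1).congr fun m => ?_
    have h1 : (2*m+1) % 2 = 1 := by omega
    have h2 : (2*m+1) / 2 = m := by omega
    simp [hs, h1, h2]
  -- the contradiction
  have hD : Tendsto (fun m => bebutovDist (timeShift φ (σ (k m) + τ (k m))) (timeShift φ (σ (k m))))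
      atTop (𝓝 0) := by
    have hsum := hOdd.add hEven
    rw [add_zero] at hsum
    refine squeeze_zero (fun m => bebutovDist_nonneg_s17 _ _) (fun m => ?_) hsum
    calc bebutovDist (timeShift φ (σ (k m) + τ (k m))) (timeShift φ (σ (k m)))
        ≤ bebutovDist (timeShift φ (σ (k m) + τ (k m))) χ + bebutovDist χ (timeShift φ (σ (k m))) :=
          bebutovDist_triangle_s17 _ _ _
      _ = bebutovDist (timeShift φ (σ (k m) + τ (k m))) χ + bebutovDist (timeShift φ (σ (k m))) χ := by
          rw [bebutovDist_comm_s17 χ]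
  have hlow : ∀ m : ℕ, ε₀ ≤ bebutovDist (timeShift φ (σ (k m) + τ (k m))) (timeShift φ (σ (k m))) := by
    intro m
    refine le_bebutovDist hε₀ (ht (k m)) ?_
    have := hdist (k m)
    have heq : (timeShift φ (σ (k m) + τ (k m))) (t (k m)) = φ (t (k m) + σ (k m) + τ (k m)) := by
      simp [timeShift, ← add_assoc]
    have heq2 : (timeShift φ (σ (k m))) (t (k m)) = φ (t (k m) + σ (k m)) := by
      simp [timeShift]
    rw [heq, heq2]
    exact le_of_lt this
  have : ε₀ ≤ 0 := ge_of_tendsto hD (Filter.Eventually.of_forall hlow)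
  linarith
end
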